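/- Let V be a finite-dimensional real vector space, let S be the space of quadratic forms on V, let L be a linear subspace of S, and let K = {Q ∈ L : Q is positive semidefinite}. Suppose a quadratic form Q spans an extreme ray of K. Then the kernel of Q is maximal among forms in L: if P ∈ L and ker Q ⊆ ker P, then P = λQ for some λ ∈ ℝ. -/

import Mathlib

open QuadraticMap

section Aux

variable {V : Type*} [AddCommGroup V] [Module ℝ V]

/-- For a psd quadratic form, `Q v = 0` implies the polar form vanishes at `v`. -/
lemma aux_psd_zero (Q : QuadraticForm ℝ V) (hQ : ∀ v : V, 0 ≤ Q v) (v : V)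
    (hv : Q v = 0) (w : V) : polar Q v w = 0 := by
  by_contra hne
  have key : ∀ t : ℝ, 0 ≤ Q w + t * polar Q v w := by
    intro t
    have := hQ (w + t • v)
    have hexp : Q (w + t • v) = Q w + t * polar Q v w := by
      have h1 : Q (w + t • v) = Q w + Q (t • v) + polar Q w (t • v) := by
        simp [polar]
      have h2 : Q (t • v) = 0 := by
        rw [QuadraticMap.map_smul, hv]; simp
      have h3 : polar Q w (t • v) = t * polar Q v w := by
        rw [polar_comm, polar_smul_left, smul_eq_mul]
      rw [h1, h2, h3]; ring
    linarith [hexp ▸ this]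
  have := key (-(Q w + 1) / polar Q v w)
  rw [div_mul_cancel₀ _ hne] at this
  linarith

lemma aux_polar_add (Q : QuadraticForm ℝ V) (v w : V)
    (h : polar Q v w = 0) : Q (v + w) = Q v + Q w := by
  have : polar Q v w = Q (v + w) - Q v - Q w := rfl
  rw [this] at h; linarith

lemma aux_self_zero (Q : QuadraticForm ℝ V) (v : V)
    (h : polar Q v v = 0) : Q v = 0 := by
  have h2 := polar_self Q v
  rw [h] at h2
  have h3 : Q v + Q v = 0 := by rw [← two_smul ℕ (Q v), ← h2]
  linarith

end Aux

/-- The key domination lemma: if ker Q ⊆ ker P (in the polar-form sense) and Q is psd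
on a finite-dimensional space, then |P| ≤ C·Q for some C ≥ 0. -/
lemma aux_dominate {V : Type*} [AddCommGroup V] [Module ℝ V] [FiniteDimensional ℝ V]
    (Q P : QuadraticForm ℝ V) (hQpsd : ∀ v : V, 0 ≤ Q v)
    (hker : ∀ v : V, (∀ w : V, polar Q v w = 0) → (∀ w : V, polar P v w = 0)) :
    ∃ C : ℝ, 0 ≤ C ∧ ∀ v : V, |P v| ≤ C * Q v := by
  classical
  set n := Module.finrank ℝ V with hn
  let e : V ≃ₗ[ℝ] EuclideanSpace ℝ (Fin n) :=
    (Module.finBasis ℝ V).equivFun.trans (EuclideanSpace.equiv (Fin n) ℝ).symm.toLinearEquiv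
  set E := EuclideanSpace ℝ (Fin n) with hE
  let Q' : QuadraticForm ℝ E := Q.comp e.symm.toLinearMap
  let P' : QuadraticForm ℝ E := P.comp e.symm.toLinearMap
  have hQ'app : ∀ x : E, Q' x = Q (e.symm x) := fun x => rfl
  have hP'app : ∀ x : E, P' x = P (e.symm x) := fun x => rfl
  have hpolarQ' : ∀ x y : E, polar Q' x y = polar Q (e.symm x) (e.symm y) := by
    intro x y; simp [polar, Q', QuadraticMap.comp_apply, map_add]
  have hpolarP' : ∀ x y : E, polar P' x y = polar P (e.symm x) (e.symm y) := by
    intro x y; simp [polar, P', QuadraticMap.comp_apply, map_add]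
  have hQ'psd : ∀ x : E, 0 ≤ Q' x := fun x => hQpsd _
  -- continuity of quadratic forms on E
  have hcont : ∀ R : QuadraticForm ℝ E, Continuous fun x => R x := by
    intro R
    let B : E →ₗ[ℝ] E →ₗ[ℝ] ℝ := polarBilin R
    let f : E →ₗ[ℝ] (E →L[ℝ] ℝ) :=
      (LinearMap.toContinuousLinearMap :
        (E →ₗ[ℝ] ℝ) ≃ₗ[ℝ] (E →L[ℝ] ℝ)).toLinearMap.comp B
    have hf : Continuous f := f.continuous_of_finiteDimensional
    have h2 : Continuous fun x : E => (f x) x := hf.clm_apply continuous_id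
    have heq : (fun x : E => R x) = fun x : E => ((f x) x) / 2 := by
      funext x
      have : (f x) x = polar R x x := rfl
      rw [this, polar_self, two_smul]; ring
    rw [heq]
    exact h2.div_const 2
  -- the kernel of Q' as a submodule
  let Kq : Submodule ℝ E :=
    { carrier := {x : E | ∀ y : E, polar Q' x y = 0}
      add_mem' := by intro a b ha hb y; rw [polar_add_left, ha y, hb y, add_zero]
      zero_mem' := by intro y; exact polar_zero_left Q' y
      smul_mem' := by intro c a ha y; rw [polar_smul_left, ha y, smul_zero] }
  have hKqmem : ∀ x : E, x ∈ Kq ↔ ∀ y : E, polar Q' x y = 0 := fun x => Iff.rfl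
  -- the kernel of Q' is contained in the kernel of P'
  have hKqP : ∀ x : E, x ∈ Kq → ∀ y : E, polar P' x y = 0 := by
    intro x hx y
    rw [hpolarP']
    refine hker (e.symm x) ?_ (e.symm y)
    intro w
    have := hx (e w)
    rwa [hpolarQ', e.symm_apply_apply] at this
  -- key vanishing facts
  have hQshift : ∀ k : E, k ∈ Kq → ∀ w : E, Q' (k + w) = Q' w := by
    intro k hk w
    rw [aux_polar_add Q' k w (hk w), aux_self_zero Q' k (hk k), zero_add]
  have hPshift : ∀ k : E, k ∈ Kq → ∀ w : E, P' (k + w) = P' w := by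
    intro k hk w
    rw [aux_polar_add P' k w (hKqP k hk w), aux_self_zero P' k (hKqP k hk k), zero_add]
  let W : Submodule ℝ E := Kqᗮ
  have hdecomp : ∀ x : E, ∃ k ∈ Kq, ∃ w ∈ W, x = k + w := by
    intro x
    have htop : Kq ⊔ W = ⊤ := Submodule.sup_orthogonal_of_hasOrthogonalProjection
    have : x ∈ Kq ⊔ W := htop ▸ Submodule.mem_top
    rcases Submodule.mem_sup.mp this with ⟨k, hk, w, hw, hkw⟩
    exact ⟨k, hk, w, hw, hkw.symm⟩
  have hWpos : ∀ w : E, w ∈ W → w ≠ 0 → 0 < Q' w := by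
    intro w hw hw0
    rcases lt_or_eq_of_le (hQ'psd w) with h | h
    · exact h
    · exfalso
      have hmem : w ∈ Kq := fun y => aux_psd_zero Q' hQ'psd w h.symm y
      have : w = 0 := by
        have := Submodule.inner_right_of_mem_orthogonal (𝕜 := ℝ) hmem hw
        exact inner_self_eq_zero.mp this
      exact hw0 this
  by_cases hW : W = ⊥
  · -- then every x is in Kq, so P = 0 and Q... take C = 0
    refine ⟨0, le_refl 0, fun v => ?_⟩
    rcases hdecomp (e v) with ⟨k, hk, w, hw, hkw⟩
    have hw0 : w = 0 := by rw [hW] at hw; simpa using hw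
    have : P v = P' (e v) := by rw [hP'app, e.symm_apply_apply]
    rw [this, hkw, hw0, add_zero]
    have : P' k = 0 := aux_self_zero P' k (hKqP k hk k)
    rw [this]; simp
  · -- W ≠ ⊥ : compactness argument on the unit sphere of W
    obtain ⟨x₀, hx₀W, hx₀⟩ := Submodule.exists_mem_ne_zero_of_ne_bot hW
    set S : Set E := Metric.sphere (0 : E) 1 ∩ (W : Set E) with hS
    have hScompact : IsCompact S :=
      (isCompact_sphere (0 : E) 1).inter_right (Submodule.closed_of_finiteDimensional W)
    have hSne : S.Nonempty := by
      refine ⟨‖x₀‖⁻¹ • x₀, ?_, W.smul_mem _ hx₀W⟩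
      simp [norm_smul, norm_inv, inv_mul_cancel₀ (norm_ne_zero_iff.mpr hx₀)]
    obtain ⟨a, haS, ham⟩ := hScompact.exists_isMinOn hSne ((hcont Q').continuousOn)
    obtain ⟨b, hbS, hbM⟩ := hScompact.exists_isMaxOn hSne
      (((hcont P').abs).continuousOn)
    set m : ℝ := Q' a with hm
    set M : ℝ := |P' b| with hMdef
    have hane : a ≠ 0 := by
      intro h
      have := haS.1
      rw [h] at this
      simp at this
    have hmpos : 0 < m := hWpos a haS.2 hane
    have hM0 : 0 ≤ M := abs_nonneg _
    refine ⟨M / m, div_nonneg hM0 hmpos.le, fun v => ?_⟩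
    rcases hdecomp (e v) with ⟨k, hk, w, hw, hkw⟩
    have hQv : Q v = Q' w := by
      rw [← e.symm_apply_apply v, ← hQ'app, hkw, hQshift k hk]
    have hPv : P v = P' w := by
      rw [← e.symm_apply_apply v, ← hP'app, hkw, hPshift k hk]
    rw [hQv, hPv]
    by_cases hw0 : w = 0
    · rw [hw0]; simp
    · set u : E := ‖w‖⁻¹ • w with hu
      have hwn : ‖w‖ ≠ 0 := norm_ne_zero_iff.mpr hw0
      have huS : u ∈ S := by
        constructor
        · simp [hu, norm_smul, inv_mul_cancel₀ hwn]
        · exact W.smul_mem _ hw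
      have hwu : w = ‖w‖ • u := by
        rw [hu, smul_smul, mul_inv_cancel₀ hwn, one_smul]
      have hQw : Q' w = ‖w‖ ^ 2 * Q' u := by
        have h := QuadraticMap.map_smul Q' ‖w‖ u
        rw [← hwu, smul_eq_mul] at h
        rw [h]; ring
      have hPw : P' w = ‖w‖ ^ 2 * P' u := by
        have h := QuadraticMap.map_smul P' ‖w‖ u
        rw [← hwu, smul_eq_mul] at h
        rw [h]; ring
      have hmu : m ≤ Q' u := ham huS
      have hMu : |P' u| ≤ M := hbM huS
      have hsq : (0:ℝ) ≤ ‖w‖ ^ 2 := sq_nonneg _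
      rw [hQw, hPw, abs_mul, abs_of_nonneg hsq]
      have hMm : M / m * m = M := div_mul_cancel₀ _ hmpos.ne'
      calc ‖w‖ ^ 2 * |P' u| ≤ ‖w‖ ^ 2 * M := by nlinarith
        _ = ‖w‖ ^ 2 * (M / m * m) := by rw [hMm]
        _ ≤ M / m * (‖w‖ ^ 2 * Q' u) := by
            nlinarith [mul_le_mul_of_nonneg_left hmu (div_nonneg hM0 hmpos.le), hsq]

theorem stmt_6
    (V : Type*) [AddCommGroup V] [Module ℝ V] [FiniteDimensional ℝ V]
    (L : Submodule ℝ (QuadraticForm ℝ V))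
    (Q : QuadraticForm ℝ V)
    (hQL : Q ∈ L)
    (hQpsd : ∀ v : V, 0 ≤ Q v)
    (hQne : Q ≠ 0)
    (hQext : ∀ Q₁ Q₂ : QuadraticForm ℝ V, Q₁ ∈ L → Q₂ ∈ L →
      (∀ v : V, 0 ≤ Q₁ v) → (∀ v : V, 0 ≤ Q₂ v) → Q = Q₁ + Q₂ →
      (∃ c : ℝ, 0 ≤ c ∧ Q₁ = c • Q) ∧ (∃ c : ℝ, 0 ≤ c ∧ Q₂ = c • Q)) :
    ∀ P : QuadraticForm ℝ V, P ∈ L →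
      {v : V | ∀ w : V, (Q (v + w) - Q v - Q w) / 2 = 0} ⊆
        {v : V | ∀ w : V, (P (v + w) - P v - P w) / 2 = 0} →
      ∃ lam : ℝ, P = lam • Q := by
  intro P hPL hsub
  -- translate the containment hypothesis to polar kernels
  have hker : ∀ v : V, (∀ w : V, QuadraticMap.polar Q v w = 0) →
      (∀ w : V, QuadraticMap.polar P v w = 0) := by
    intro v hv
    have hvmem : v ∈ {v : V | ∀ w : V, (Q (v + w) - Q v - Q w) / 2 = 0} := by
      intro w
      have := hv w
      simp only [QuadraticMap.polar] at this
      rw [this]; norm_num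
    intro w
    have := hsub hvmem w
    simp only [QuadraticMap.polar]
    have h2 : (P (v + w) - P v - P w) = 0 := by linarith
    exact h2
  obtain ⟨C, hC0, hC⟩ := aux_dominate Q P hQpsd hker
  set D : ℝ := C + 1 with hD
  have hDpos : 0 < D := by linarith
  have hCD : ∀ v : V, |P v| ≤ D * Q v := by
    intro v
    have := hC v
    nlinarith [hQpsd v, abs_nonneg (P v)]
  set Q₁ : QuadraticForm ℝ V := (2⁻¹ : ℝ) • Q + ((2 * D)⁻¹ : ℝ) • P with hQ₁
  set Q₂ : QuadraticForm ℝ V := (2⁻¹ : ℝ) • Q - ((2 * D)⁻¹ : ℝ) • P with hQ₂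
  have hQ₁L : Q₁ ∈ L := L.add_mem (L.smul_mem _ hQL) (L.smul_mem _ hPL)
  have hQ₂L : Q₂ ∈ L := L.sub_mem (L.smul_mem _ hQL) (L.smul_mem _ hPL)
  have h2D : (2 * D) ≠ 0 := by positivity
  have hQ₁app : ∀ v : V, Q₁ v = 2⁻¹ * Q v + (2 * D)⁻¹ * P v := by
    intro v
    rw [hQ₁, QuadraticMap.add_apply, QuadraticMap.smul_apply, QuadraticMap.smul_apply]
    simp [smul_eq_mul]
  have hQ₂app : ∀ v : V, Q₂ v = 2⁻¹ * Q v - (2 * D)⁻¹ * P v := by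
    intro v
    rw [hQ₂, QuadraticMap.sub_apply, QuadraticMap.smul_apply, QuadraticMap.smul_apply]
    simp [smul_eq_mul]
  have hbound : ∀ v : V, (2 * D)⁻¹ * |P v| ≤ 2⁻¹ * Q v := by
    intro v
    have h1 := hCD v
    have h2 : (2 * D)⁻¹ * |P v| ≤ (2 * D)⁻¹ * (D * Q v) := by
      apply mul_le_mul_of_nonneg_left h1
      positivity
    have h3 : (2 * D)⁻¹ * (D * Q v) = 2⁻¹ * Q v := by
      field_simp
    linarith
  have hQ₁psd : ∀ v : V, 0 ≤ Q₁ v := by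
    intro v
    rw [hQ₁app]
    have := hbound v
    have habs := neg_abs_le (P v)
    have hinv : 0 ≤ (2 * D)⁻¹ := by positivity
    nlinarith
  have hQ₂psd : ∀ v : V, 0 ≤ Q₂ v := by
    intro v
    rw [hQ₂app]
    have := hbound v
    have habs := le_abs_self (P v)
    have hinv : 0 ≤ (2 * D)⁻¹ := by positivity
    nlinarith
  have hsum : Q = Q₁ + Q₂ := by
    ext v
    rw [QuadraticMap.add_apply, hQ₁app, hQ₂app]
    ring
  obtain ⟨⟨c, hc0, hc⟩, _⟩ := hQext Q₁ Q₂ hQ₁L hQ₂L hQ₁psd hQ₂psd hsum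
  refine ⟨2 * D * (c - 2⁻¹), ?_⟩
  ext v
  have h1 : Q₁ v = c * Q v := by rw [hc, QuadraticMap.smul_apply, smul_eq_mul]
  rw [hQ₁app] at h1
  rw [QuadraticMap.smul_apply, smul_eq_mul]
  have : (2 * D)⁻¹ * P v = (c - 2⁻¹) * Q v := by linarith
  calc P v = (2 * D) * ((2 * D)⁻¹ * P v) := by field_simp
    _ = 2 * D * (c - 2⁻¹) * Q v := by rw [this]; ring
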